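/- Commutator of the perturbed transport operator with a vertical derivative (Lemma 3.1, second identity): for every i ∈ {1,2,3} and every smooth f(t,x,v), [𝐓_φ, V_i] f = −(vⁱ/v⁰)·𝐞_0 f − 𝐞_i f + 𝐓(φ)·V_i f. -/

import Mathlib

noncomputable section

/-- Phase space point `(t, x, v)`. -/
abbrev Pt : Type := ℝ × (Fin 3 → ℝ) × (Fin 3 → ℝ)

/-- `v⁰ = √(1+|v|²)`. -/
def vzero (v : Fin 3 → ℝ) : ℝ := Real.sqrt (1 + ∑ i, (v i) ^ 2)

/-- Vertical derivative `V_i f = ∂_{vⁱ} f`. -/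
def Vop (i : Fin 3) (f : Pt → ℝ) (p : Pt) : ℝ :=
  fderiv ℝ f p ((0 : ℝ), (0 : Fin 3 → ℝ), Pi.single i 1)

/-- `W f = vⁱ ∂_{vⁱ} f`. -/
def Wop (f : Pt → ℝ) (p : Pt) : ℝ := ∑ i, p.2.2 i * Vop i f p

/-- Derivative of a function of `(t,x)` in the constant spacetime direction `d`. -/
def Dphi (φ : ℝ × (Fin 3 → ℝ) → ℝ) (d : ℝ × (Fin 3 → ℝ)) (q : ℝ × (Fin 3 → ℝ)) : ℝ :=
  fderiv ℝ φ q d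

/-- `𝐓(φ) = v⁰ ∂_t φ + vⁱ ∂_{xⁱ} φ`, evaluated at a phase-space point. -/
def TphiFn (φ : ℝ × (Fin 3 → ℝ) → ℝ) (p : Pt) : ℝ :=
  vzero p.2.2 * Dphi φ ((1 : ℝ), (0 : Fin 3 → ℝ)) (p.1, p.2.1) +
    ∑ i, p.2.2 i * Dphi φ ((0 : ℝ), Pi.single i 1) (p.1, p.2.1)

/-- Free transport operator `𝐓 f = v⁰ ∂_t f + vⁱ ∂_{xⁱ} f`. -/
def Tfree (f : Pt → ℝ) (p : Pt) : ℝ :=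
  vzero p.2.2 * fderiv ℝ f p ((1 : ℝ), (0 : Fin 3 → ℝ), (0 : Fin 3 → ℝ)) +
    ∑ i, p.2.2 i * fderiv ℝ f p ((0 : ℝ), Pi.single i 1, (0 : Fin 3 → ℝ))

/-- Perturbed transport operator `𝐓_φ f = 𝐓 f − (𝐓(φ) vⁱ + ∂_{xⁱ}φ) ∂_{vⁱ} f`. -/
def Tpert (φ : ℝ × (Fin 3 → ℝ) → ℝ) (f : Pt → ℝ) (p : Pt) : ℝ :=
  Tfree f p -
    ∑ i, (TphiFn φ p * p.2.2 i + Dphi φ ((0 : ℝ), Pi.single i 1) (p.1, p.2.1)) * Vop i f p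

/-- Generalized translation `𝐞_d f = ∂_d f − (∂_d φ) · vⁱ ∂_{vⁱ} f` (spacetime direction `d`). -/
def eop (φ : ℝ × (Fin 3 → ℝ) → ℝ) (d : ℝ × (Fin 3 → ℝ)) (f : Pt → ℝ) (p : Pt) : ℝ :=
  fderiv ℝ f p (d.1, d.2, (0 : Fin 3 → ℝ)) - Dphi φ d (p.1, p.2.1) * Wop f p

/-- The coordinate direction `∂_{x^μ}`, `μ ∈ {0,1,2,3}`, with `x⁰ = t`. -/
def dir4 (μ : Fin 4) : ℝ × (Fin 3 → ℝ) :=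
  if _h : (μ : ℕ) = 0 then ((1 : ℝ), (0 : Fin 3 → ℝ))
  else ((0 : ℝ), Pi.single (⟨(μ : ℕ) - 1, by have := μ.isLt; omega⟩ : Fin 3) 1)

/-! ### Auxiliary material for the proof -/

def coordL (j : Fin 3) : Pt →L[ℝ] ℝ :=
  (ContinuousLinearMap.proj j).comp ((ContinuousLinearMap.snd ℝ (Fin 3 → ℝ) (Fin 3 → ℝ)).comp
    (ContinuousLinearMap.snd ℝ ℝ ((Fin 3 → ℝ) × (Fin 3 → ℝ))))

@[simp] lemma coordL_apply (j : Fin 3) (u : Pt) : coordL j u = u.2.2 j := rfl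

def PL : Pt →L[ℝ] ℝ × (Fin 3 → ℝ) :=
  (ContinuousLinearMap.fst ℝ ℝ ((Fin 3 → ℝ) × (Fin 3 → ℝ))).prod
    ((ContinuousLinearMap.fst ℝ (Fin 3 → ℝ) (Fin 3 → ℝ)).comp
      (ContinuousLinearMap.snd ℝ ℝ ((Fin 3 → ℝ) × (Fin 3 → ℝ))))

@[simp] lemma PL_apply (u : Pt) : PL u = (u.1, u.2.1) := rfl

lemma vzero_pos (v : Fin 3 → ℝ) : 0 < vzero v := Real.sqrt_pos.2 (by positivity)

lemma hasFDerivAt_vzero (p : Pt) :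
    HasFDerivAt (fun q : Pt => vzero q.2.2)
      ((vzero p.2.2)⁻¹ • ∑ j, p.2.2 j • coordL j) p := by
  have hpos : (0:ℝ) < 1 + ∑ j, (p.2.2 j)^2 := by positivity
  have hg : HasFDerivAt (fun q : Pt => 1 + ∑ j, (q.2.2 j)^2)
      (∑ j : Fin 3, (2 * p.2.2 j) • coordL j) p := by
    have h1 : (fun q : Pt => 1 + ∑ j, (q.2.2 j)^2)
        = fun q : Pt => 1 + ∑ j, q.2.2 j * q.2.2 j := by
      funext q; simp [pow_two]
    rw [h1]
    apply HasFDerivAt.const_add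
    have h2 := HasFDerivAt.sum (u := Finset.univ)
      (fun j _ => ((coordL j).hasFDerivAt (x := p)).mul ((coordL j).hasFDerivAt (x := p)))
    have h3 : (∑ j : Fin 3, ((coordL j) p • coordL j + (coordL j) p • coordL j))
        = ∑ j : Fin 3, (2 * p.2.2 j) • coordL j := by
      refine Finset.sum_congr rfl fun j _ => ?_
      refine ContinuousLinearMap.ext fun u => ?_
      simp; ring
    rw [h3] at h2
    exact h2
  have hs := (Real.hasDerivAt_sqrt (ne_of_gt hpos)).comp_hasFDerivAt p hg
  have heq : ((vzero p.2.2)⁻¹ • ∑ j, p.2.2 j • coordL j : Pt →L[ℝ] ℝ)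
      = (1 / (2 * Real.sqrt (1 + ∑ j, (p.2.2 j)^2))) • ∑ j : Fin 3, (2 * p.2.2 j) • coordL j := by
    have hne : Real.sqrt (1 + ∑ j, (p.2.2 j)^2) ≠ 0 := ne_of_gt (Real.sqrt_pos.2 hpos)
    refine ContinuousLinearMap.ext fun u => ?_
    simp only [ContinuousLinearMap.smul_apply, ContinuousLinearMap.coe_sum', Finset.sum_apply,
      ContinuousLinearMap.coe_smul', Pi.smul_apply, coordL_apply, smul_eq_mul]
    rw [show vzero p.2.2 = Real.sqrt (1 + ∑ j, (p.2.2 j)^2) from rfl]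
    rw [Finset.mul_sum, Finset.mul_sum]
    refine Finset.sum_congr rfl fun j _ => ?_
    field_simp
  rw [heq]
  exact hs

lemma hasFDerivAt_fderiv_apply {E F : Type*} [NormedAddCommGroup E] [NormedSpace ℝ E]
    [NormedAddCommGroup F] [NormedSpace ℝ F]
    (f : E → F) (hf : ContDiff ℝ (⊤ : ℕ∞) f) (p w : E) :
    HasFDerivAt (fun q => fderiv ℝ f q w)
      ((ContinuousLinearMap.apply ℝ F w).comp (fderiv ℝ (fderiv ℝ f) p)) p := by
  have hd : DifferentiableAt ℝ (fderiv ℝ f) p :=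
    ((hf.fderiv_right (m := (⊤ : ℕ∞)) (by exact_mod_cast (le_top : (⊤:ℕ∞)+1 ≤ ⊤))).differentiable
      (by simp)).differentiableAt
  exact ((ContinuousLinearMap.apply ℝ F w).hasFDerivAt).comp p hd.hasFDerivAt

lemma sndDeriv_symm {E : Type*} [NormedAddCommGroup E] [NormedSpace ℝ E]
    (f : E → ℝ) (hf : ContDiff ℝ (⊤ : ℕ∞) f) (p u w : E) :
    fderiv ℝ (fderiv ℝ f) p u w = fderiv ℝ (fderiv ℝ f) p w u :=
  (hf.contDiffAt.isSymmSndFDerivAt (by rw [minSmoothness_of_isRCLikeNormedField]; exact WithTop.coe_le_coe.2 (le_top : (2:ℕ∞) ≤ ⊤))) u w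

lemma diff_Dphi (φ : ℝ × (Fin 3 → ℝ) → ℝ) (hφ : ContDiff ℝ (⊤ : ℕ∞) φ)
    (d : ℝ × (Fin 3 → ℝ)) : Differentiable ℝ (Dphi φ d) := by
  have h1 : Differentiable ℝ (fderiv ℝ φ) :=
    (hφ.fderiv_right (m := (⊤ : ℕ∞)) (by exact_mod_cast (le_top : (⊤:ℕ∞)+1 ≤ ⊤))).differentiable
      (by simp)
  exact fun q => ((ContinuousLinearMap.apply ℝ ℝ d).hasFDerivAt.comp q
    (h1 q).hasFDerivAt).differentiableAt

lemma hasFDerivAt_Dphi_comp (φ : ℝ × (Fin 3 → ℝ) → ℝ) (hφ : ContDiff ℝ (⊤ : ℕ∞) φ)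
    (d : ℝ × (Fin 3 → ℝ)) (p : Pt) :
    HasFDerivAt (fun q : Pt => Dphi φ d (q.1, q.2.1))
      ((fderiv ℝ (Dphi φ d) (p.1, p.2.1)).comp PL) p :=
  by have h := ((diff_Dphi φ hφ d (p.1, p.2.1)).hasFDerivAt).comp p PL.hasFDerivAt; exact h

set_option maxHeartbeats 1000000 in
/-- Lemma 3.1, second identity: `[𝐓_φ, V_i] f = −(vⁱ/v⁰)·𝐞_0 f − 𝐞_i f + 𝐓(φ)·V_i f`. -/
theorem commutator_Tpert_vertical
    (φ : ℝ × (Fin 3 → ℝ) → ℝ) (hφ : ContDiff ℝ (⊤ : ℕ∞) φ)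
    (f : Pt → ℝ) (hf : ContDiff ℝ (⊤ : ℕ∞) f) (i : Fin 3) (p : Pt) :
    Tpert φ (Vop i f) p - Vop i (Tpert φ f) p =
      -(p.2.2 i / vzero p.2.2) * eop φ ((1 : ℝ), (0 : Fin 3 → ℝ)) f p
        - eop φ ((0 : ℝ), Pi.single i 1) f p
        + TphiFn φ p * Vop i f p := by
  have hv0 := hasFDerivAt_vzero p
  have hA := hasFDerivAt_fderiv_apply f hf p ((1:ℝ), (0:Fin 3 → ℝ), (0:Fin 3 → ℝ))
  have hB := fun j : Fin 3 => hasFDerivAt_fderiv_apply f hf p ((0:ℝ), Pi.single j 1, (0:Fin 3 → ℝ))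
  have hC := fun j : Fin 3 => hasFDerivAt_fderiv_apply f hf p ((0:ℝ), (0:Fin 3 → ℝ), Pi.single j 1)
  have hco := fun j : Fin 3 => (coordL j).hasFDerivAt (x := p)
  have hph := fun d : ℝ × (Fin 3 → ℝ) => hasFDerivAt_Dphi_comp φ hφ d p
  have hT := (hv0.mul (hph ((1:ℝ), (0:Fin 3 → ℝ)))).add
    (HasFDerivAt.sum (u := Finset.univ) fun j _ => (hco j).mul (hph ((0:ℝ), Pi.single j 1)))
  have hc := fun j : Fin 3 => (hT.mul (hco j)).add (hph ((0:ℝ), Pi.single j 1))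
  have hS := HasFDerivAt.sum (u := Finset.univ) (fun j (_ : j ∈ Finset.univ) => (hc j).mul (hC j))
  have hTf := (hv0.mul hA).add
    (HasFDerivAt.sum (u := Finset.univ) fun j _ => (hco j).mul (hB j))
  have hTp := hTf.sub hS
  have hTp' : HasFDerivAt (Tpert φ f) _ p := hTp
  have hVder : fderiv ℝ (Vop i f) p
      = (ContinuousLinearMap.apply ℝ ℝ ((0:ℝ), (0:Fin 3 → ℝ), Pi.single i 1)).comp
        (fderiv ℝ (fderiv ℝ f) p) :=
    (hasFDerivAt_fderiv_apply f hf p ((0:ℝ), (0:Fin 3 → ℝ), Pi.single i 1)).fderiv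
  rw [show Vop i (Tpert φ f) p
      = fderiv ℝ (Tpert φ f) p ((0:ℝ), (0:Fin 3 → ℝ), Pi.single i 1) from rfl, hTp'.fderiv]
  simp only [Tpert, Tfree, TphiFn, Vop, Wop, eop, Dphi]
  rw [hVder]
  simp only [ContinuousLinearMap.coe_comp', Function.comp_apply, ContinuousLinearMap.apply_apply,
    ContinuousLinearMap.coe_sub', Pi.sub_apply, ContinuousLinearMap.add_apply,
    ContinuousLinearMap.coe_add', Pi.add_apply, ContinuousLinearMap.coe_sum', Finset.sum_apply,
    ContinuousLinearMap.smul_apply, ContinuousLinearMap.coe_smul', Pi.smul_apply,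
    coordL_apply, PL_apply, smul_eq_mul]
  have hzero : ∀ d : ℝ × (Fin 3 → ℝ),
      (fderiv ℝ (Dphi φ d) (p.1, p.2.1)) ((0:ℝ), (0:Fin 3 → ℝ)) = 0 :=
    fun d => map_zero _
  have hsym : ∀ w : Pt, fderiv ℝ (fderiv ℝ f) p ((0:ℝ), (0:Fin 3 → ℝ), Pi.single i 1) w
      = fderiv ℝ (fderiv ℝ f) p w ((0:ℝ), (0:Fin 3 → ℝ), Pi.single i 1) :=
    fun w => sndDeriv_symm f hf p _ w
  simp only [hzero, hsym, mul_zero, zero_mul, add_zero, zero_add]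
  fin_cases i <;>
  · simp only [Fin.sum_univ_three, Pi.single_apply, Fin.isValue, mul_ite, mul_one, mul_zero,
      ite_mul, one_mul, zero_mul, reduceIte, add_zero, zero_add, Fin.zero_eta, Fin.mk_one,
      Fin.reduceFinMk, Fin.reduceEq, Pi.mul_apply, Pi.add_apply, coordL_apply]
    ring
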